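/- Let N, n, k be natural numbers with 1 ≤ k ≤ n ≤ N, and define Pr'(R) = Σ_{x=k}^{min(R,n)} C(R, x)·C(N − R, n − x) / C(N, n) as a rational number. Then for every R with k ≤ R and R + 1 ≤ N − (n − k), one has Pr'(R + 1) = Pr'(R) + C(R, k − 1)·C(N − R − 1, n − k) / C(N, n). -/

import Mathlib

/-- Telescoping key identity. -/
lemma sp_fec_key (N n k R : ℕ) (hk : 1 ≤ k) (hkn : k ≤ n) (hRN : R + 1 ≤ N) :
    ∑ x ∈ Finset.Icc k n,
        (((R+1).choose x * (N - (R+1)).choose (n - x) : ℚ)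
          - (R.choose x * (N - R).choose (n - x) : ℚ))
      = (R.choose (k-1) * (N - R - 1).choose (n - k) : ℚ) := by
  have hNR : N - (R+1) = N - R - 1 := by omega
  rw [hNR]
  rw [← Finset.Ico_add_one_right_eq_Icc, Finset.sum_Ico_eq_sum_range]
  have hm : n + 1 - k = (n - k) + 1 := by omega
  rw [hm, Finset.sum_range_succ]
  set m := n - k with hmdef
  -- the telescoping function
  set G : ℕ → ℚ := fun i => (R.choose (k - 1 + i) : ℚ) * ((N - R - 1).choose (n - k - i) : ℚ)
    with hG
  have hstep : ∀ i ∈ Finset.range m,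
      (((R+1).choose (k + i) * (N - R - 1).choose (n - (k + i)) : ℚ)
        - (R.choose (k + i) * (N - R).choose (n - (k + i)) : ℚ))
      = G i - G (i+1) := by
    intro i hi
    rw [Finset.mem_range] at hi
    have h1 : k + i = (k - 1 + i) + 1 := by omega
    have h2 : n - (k + i) = (n - k - (i+1)) + 1 := by omega
    have h3 : N - R = (N - R - 1) + 1 := by omega
    have hc1 : (R+1).choose (k + i) = R.choose (k - 1 + i) + R.choose (k + i) := by
      rw [h1, Nat.choose_succ_succ]
    have hc2 : (N - R).choose (n - (k + i))
        = (N - R - 1).choose (n - k - (i+1)) + (N - R - 1).choose (n - k - i) := by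
      have h6 : n - k - (i+1) + 1 = n - k - i := by omega
      conv_lhs => rw [h2, h3]
      rw [Nat.choose_succ_succ, Nat.succ_eq_add_one, h6]
    have h4 : n - k - i = n - (k + i) := by omega
    have h5 : k - 1 + (i + 1) = k + i := by omega
    rw [hc1, hc2]
    simp only [hG, h4, h5]
    push_cast
    ring
  rw [Finset.sum_congr rfl hstep, Finset.sum_range_sub' G]
  -- top term
  have ht1 : k + m = n := by omega
  have ht2 : n - (k + m) = 0 := by omega
  have ht3 : (R+1).choose n = R.choose (n-1) + R.choose n := by
    have h1 : n = (n - 1) + 1 := by omega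
    rw [h1, Nat.choose_succ_succ]
    congr 1
  have hGm : G m = (R.choose (n - 1) : ℚ) := by
    simp only [hG]
    have : k - 1 + m = n - 1 := by omega
    have h2 : n - k - m = 0 := by omega
    rw [this, h2]
    simp
  have hG0 : G 0 = (R.choose (k-1) * (N - R - 1).choose (n - k) : ℚ) := by
    simp only [hG]
    simp
  simp only [ht1, Nat.sub_self, Nat.choose_zero_right, hGm, hG0, ht3]
  push_cast
  ring

/-- Recurrence for the SP-FEC layer recovery probability:
`Pr'(R + 1) = Pr'(R) + C(R, k - 1) * C(N - R - 1, n - k) / C(N, n)`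
for `k ≤ R` and `R + 1 ≤ N - (n - k)`. -/
theorem sp_fec_recovery_succ (N n k : ℕ)
    (hk : 1 ≤ k) (hkn : k ≤ n) (hnN : n ≤ N)
    (Pr' : ℕ → ℚ)
    (hPr : ∀ R, Pr' R = ∑ x ∈ Finset.Icc k (min R n),
        (R.choose x * (N - R).choose (n - x) : ℚ) / N.choose n)
    (R : ℕ) (hkR : k ≤ R) (hR : R + 1 ≤ N - (n - k)) :
    Pr' (R + 1) = Pr' R + (R.choose (k - 1) * (N - R - 1).choose (n - k) : ℚ) / N.choose n := by
  have hRN : R + 1 ≤ N := by omega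
  rw [hPr, hPr]
  -- extend both sums to Icc k n
  have hext : ∀ S : ℕ, ∑ x ∈ Finset.Icc k (min S n),
      (S.choose x * (N - S).choose (n - x) : ℚ) / N.choose n
      = ∑ x ∈ Finset.Icc k n, (S.choose x * (N - S).choose (n - x) : ℚ) / N.choose n := by
    intro S
    apply Finset.sum_subset
    · intro x hx
      simp only [Finset.mem_Icc] at hx ⊢
      omega
    · intro x hx hx'
      simp only [Finset.mem_Icc] at hx hx'
      have hSx : S < x := by omega
      rw [Nat.choose_eq_zero_of_lt hSx]
      simp
  rw [hext (R+1), hext R]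
  rw [← Finset.sum_div, ← Finset.sum_div, ← add_div]
  congr 1
  have key := sp_fec_key N n k R hk hkn hRN
  rw [Finset.sum_sub_distrib] at key
  linarith [key]
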